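/- Let ψ, θ be C¹ on the closure of Ω and vanish on ∂Ω, let f₁, f₂ be continuous on the closure of Ω, and let R_a > 0, L, A ≥ 0, and C ∈ (0,1] be constants such that ‖ψ‖₂ ≤ C·‖∇ψ‖₂, ‖θ‖₂ ≤ C·‖∇θ‖₂, ‖∂ₓθ‖₄ ≤ L, ‖∂_yθ‖₄ ≤ L, and ‖θ‖₄ ≤ A·‖∇θ‖₂. Then ‖∇ψ‖₂² + ‖∇θ‖₂² − R_a·∫_Ω (∂ₓθ)·ψ + ∫_Ω J(ψ,θ)·θ − ∫_Ω (f₁·ψ + f₂·θ) ≥ (1/2 − C·R_a/2 − A·L)·‖∇ψ‖₂² + (1/2 − R_a/2 − A·L)·‖∇θ‖₂² − (C²/2)·(‖f₁‖₂² + ‖f₂‖₂²). -/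

import Mathlib

open MeasureTheory Real Set Filter

noncomputable section

/-- The open unit square Ω = (0,1) × (0,1) in ℝ². -/
def Omg : Set (ℝ × ℝ) := Ioo (0:ℝ) 1 ×ˢ Ioo (0:ℝ) 1

/-- Partial derivative in the x-direction. -/
def px (f : ℝ × ℝ → ℝ) (p : ℝ × ℝ) : ℝ := fderiv ℝ f p (1, 0)

/-- Partial derivative in the y-direction. -/
def py (f : ℝ × ℝ → ℝ) (p : ℝ × ℝ) : ℝ := fderiv ℝ f p (0, 1)

/-- Laplacian. -/
def lap (f : ℝ × ℝ → ℝ) (p : ℝ × ℝ) : ℝ := px (px f) p + py (py f) p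

/-- Jacobian determinant J(ψ,θ) = ∂ₓψ·∂_yθ − ∂_yψ·∂ₓθ. -/
def Jac (ψ θ : ℝ × ℝ → ℝ) (p : ℝ × ℝ) : ℝ := px ψ p * py θ p - py ψ p * px θ p

/-- The L^q norm over Ω: ‖f‖_q = (∫_Ω |f|^q)^(1/q). -/
def Lnorm (f : ℝ × ℝ → ℝ) (q : ℝ) : ℝ := (∫ p in Omg, |f p| ^ q) ^ (1 / q)

/-- ‖∇f‖₂ = (∫_Ω (|∂ₓf|² + |∂_yf|²))^(1/2). -/
def gradNorm (f : ℝ × ℝ → ℝ) : ℝ :=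
  (∫ p in Omg, (|px f p| ^ 2 + |py f p| ^ 2)) ^ ((1:ℝ) / 2)


lemma Omg_open : IsOpen Omg := (isOpen_Ioo).prod isOpen_Ioo
lemma Omg_meas : MeasurableSet Omg := Omg_open.measurableSet
lemma closure_Omg : closure Omg = Icc (0:ℝ) 1 ×ˢ Icc (0:ℝ) 1 := by
  rw [Omg, closure_prod_eq, closure_Ioo one_ne_zero.symm]
lemma compact_closure_Omg : IsCompact (closure Omg) := by
  rw [closure_Omg]; exact (isCompact_Icc).prod isCompact_Icc
lemma uniqueDiffOn_Omg : UniqueDiffOn ℝ (closure Omg) := by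
  rw [closure_Omg]; exact (uniqueDiffOn_Icc one_pos).prod (uniqueDiffOn_Icc one_pos)
lemma Omg_vol : (volume : Measure (ℝ × ℝ)) Omg ≠ ⊤ := by
  refine ne_of_lt (lt_of_le_of_lt (measure_mono (subset_closure)) ?_)
  exact compact_closure_Omg.measure_lt_top

instance : IsFiniteMeasure ((volume : Measure (ℝ × ℝ)).restrict Omg) :=
  ⟨by rw [Measure.restrict_apply_univ]; exact Omg_vol.lt_top⟩

/-- a function that agrees on Ω with some continuous function on the closure -/
def Nice (u : ℝ × ℝ → ℝ) : Prop :=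
  ∃ g : ℝ × ℝ → ℝ, ContinuousOn g (closure Omg) ∧ EqOn u g Omg

lemma Nice.memLp {u : ℝ × ℝ → ℝ} (hu : Nice u) (p : ENNReal) :
    MemLp u p (volume.restrict Omg) := by
  obtain ⟨g, hg, heq⟩ := hu
  have hcont : ContinuousOn u Omg := fun x hx =>
    ((hg.continuousWithinAt (subset_closure hx)).mono subset_closure).congr
      (fun y hy => heq hy) (heq hx)
  have hm : AEStronglyMeasurable u (volume.restrict Omg) :=
    hcont.aestronglyMeasurable Omg_meas
  obtain ⟨M, hM⟩ := compact_closure_Omg.exists_bound_of_continuousOn hg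
  refine MemLp.of_bound hm M ?_
  filter_upwards [ae_restrict_mem Omg_meas] with x hx
  rw [show u x = g x from heq hx]
  exact hM x (subset_closure hx)

lemma Nice.integrable {u : ℝ × ℝ → ℝ} (hu : Nice u) : IntegrableOn u Omg :=
  memLp_one_iff_integrable.mp (hu.memLp 1)

lemma Nice.mul {u v : ℝ × ℝ → ℝ} (hu : Nice u) (hv : Nice v) : Nice (fun x => u x * v x) := by
  obtain ⟨g, hg, hge⟩ := hu; obtain ⟨h, hh, hhe⟩ := hv
  exact ⟨fun x => g x * h x, hg.mul hh, fun x hx => by simp [hge hx, hhe hx]⟩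

lemma Nice.abs {u : ℝ × ℝ → ℝ} (hu : Nice u) : Nice (fun x => |u x|) := by
  obtain ⟨g, hg, hge⟩ := hu
  exact ⟨fun x => |g x|, hg.abs, fun x hx => by simp [hge hx]⟩

lemma nice_px {f : ℝ × ℝ → ℝ} (hf : ContDiffOn ℝ 1 f (closure Omg)) : Nice (px f) := by
  refine ⟨fun p => fderivWithin ℝ f (closure Omg) p (1, 0), ?_, ?_⟩
  · have := hf.continuousOn_fderivWithin uniqueDiffOn_Omg le_rfl
    exact (ContinuousLinearMap.apply ℝ ℝ ((1:ℝ), (0:ℝ))).continuous.comp_continuousOn this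
  · intro p hp
    have h2 : fderivWithin ℝ f (closure Omg) p = fderiv ℝ f p :=
      fderivWithin_of_mem_nhds (mem_nhds_iff.mpr ⟨Omg, subset_closure, Omg_open, hp⟩)
    simp [px, h2]

lemma nice_py {f : ℝ × ℝ → ℝ} (hf : ContDiffOn ℝ 1 f (closure Omg)) : Nice (py f) := by
  refine ⟨fun p => fderivWithin ℝ f (closure Omg) p (0, 1), ?_, ?_⟩
  · have := hf.continuousOn_fderivWithin uniqueDiffOn_Omg le_rfl
    exact (ContinuousLinearMap.apply ℝ ℝ ((0:ℝ), (1:ℝ))).continuous.comp_continuousOn this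
  · intro p hp
    have h2 : fderivWithin ℝ f (closure Omg) p = fderiv ℝ f p :=
      fderivWithin_of_mem_nhds (mem_nhds_iff.mpr ⟨Omg, subset_closure, Omg_open, hp⟩)
    simp [py, h2]

lemma Nice.sub {u v : ℝ × ℝ → ℝ} (hu : Nice u) (hv : Nice v) : Nice (fun x => u x - v x) := by
  obtain ⟨g, hg, hge⟩ := hu; obtain ⟨h, hh, hhe⟩ := hv
  exact ⟨fun x => g x - h x, hg.sub hh, fun x hx => by simp [hge hx, hhe hx]⟩

lemma Nice.add {u v : ℝ × ℝ → ℝ} (hu : Nice u) (hv : Nice v) : Nice (fun x => u x + v x) := by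
  obtain ⟨g, hg, hge⟩ := hu; obtain ⟨h, hh, hhe⟩ := hv
  exact ⟨fun x => g x + h x, hg.add hh, fun x hx => by simp [hge hx, hhe hx]⟩

lemma rpow_nat2 (x : ℝ) : x ^ (2:ℝ) = x * x := by
  rw [show (2:ℝ) = ((2:ℕ):ℝ) by norm_num, Real.rpow_natCast]; ring


lemma Lnorm_nonneg (u : ℝ × ℝ → ℝ) (q : ℝ) : 0 ≤ Lnorm u q :=
  Real.rpow_nonneg (integral_nonneg fun p => Real.rpow_nonneg (abs_nonneg _) q) _

lemma Lnorm_sq (u : ℝ × ℝ → ℝ) : Lnorm u 2 ^ 2 = ∫ p in Omg, |u p| ^ (2:ℝ) := by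
  have h : 0 ≤ ∫ p in Omg, |u p| ^ (2:ℝ) :=
    integral_nonneg fun p => Real.rpow_nonneg (abs_nonneg _) _
  rw [Lnorm, ← Real.rpow_natCast _ 2, ← Real.rpow_mul h]; norm_num

lemma two_two_conj : Real.HolderConjugate 2 2 := Real.HolderConjugate.two_two

lemma holder22 {u v : ℝ × ℝ → ℝ} (hu : Nice u) (hv : Nice v) :
    ∫ p in Omg, |u p| * |v p| ≤
      (∫ p in Omg, |u p| ^ (2:ℝ)) ^ ((1:ℝ)/2) * (∫ p in Omg, |v p| ^ (2:ℝ)) ^ ((1:ℝ)/2) := by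
  have := integral_mul_le_Lp_mul_Lq_of_nonneg (μ := volume.restrict Omg) two_two_conj
    (f := fun p => |u p|) (g := fun p => |v p|)
    (Eventually.of_forall fun p => abs_nonneg _)
    (Eventually.of_forall fun p => abs_nonneg _)
    (by simpa using hu.abs.memLp (ENNReal.ofReal 2))
    (by simpa using hv.abs.memLp (ENNReal.ofReal 2))
  simpa using this

lemma cauchy_schwarz {u v : ℝ × ℝ → ℝ} (hu : Nice u) (hv : Nice v) :
    |∫ p in Omg, u p * v p| ≤ Lnorm u 2 * Lnorm v 2 := by
  have h1 : |∫ p in Omg, u p * v p| ≤ ∫ p in Omg, |u p| * |v p| := by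
    simpa [Real.norm_eq_abs, abs_mul] using
      norm_integral_le_integral_norm (μ := volume.restrict Omg) (f := fun p => u p * v p)
  calc |∫ p in Omg, u p * v p| ≤ ∫ p in Omg, |u p| * |v p| := h1
    _ ≤ _ := holder22 hu hv
    _ = Lnorm u 2 * Lnorm v 2 := by rw [Lnorm, Lnorm]

lemma rpow_nat4 (x : ℝ) : x ^ (4:ℝ) = x*x*x*x := by
  rw [show (4:ℝ) = ((4:ℕ):ℝ) by norm_num, Real.rpow_natCast]; ring

lemma sqrt_part_le {v w : ℝ × ℝ → ℝ} (hv : Nice v) (hw : Nice w) :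
    (∫ p in Omg, (|v p| * |w p|) ^ (2:ℝ)) ^ ((1:ℝ)/2) ≤ Lnorm v 4 * Lnorm w 4 := by
  have e1 : (fun p => (|v p| * |w p|) ^ (2:ℝ)) = fun p => |v p * v p| * |w p * w p| :=
    funext fun p => by rw [rpow_nat2, abs_mul, abs_mul]; ring
  have e2 : (fun p => |v p * v p| ^ (2:ℝ)) = fun p => |v p| ^ (4:ℝ) :=
    funext fun p => by rw [rpow_nat2, rpow_nat4, abs_mul]; ring
  have e3 : (fun p => |w p * w p| ^ (2:ℝ)) = fun p => |w p| ^ (4:ℝ) :=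
    funext fun p => by rw [rpow_nat2, rpow_nat4, abs_mul]; ring
  have hX : (∫ p in Omg, (|v p| * |w p|) ^ (2:ℝ))
      ≤ (∫ p in Omg, |v p| ^ (4:ℝ)) ^ ((1:ℝ)/2) * (∫ p in Omg, |w p| ^ (4:ℝ)) ^ ((1:ℝ)/2) := by
    calc (∫ p in Omg, (|v p| * |w p|) ^ (2:ℝ))
        = ∫ p in Omg, |v p * v p| * |w p * w p| := by rw [e1]
      _ ≤ (∫ p in Omg, |v p * v p| ^ (2:ℝ)) ^ ((1:ℝ)/2)
          * (∫ p in Omg, |w p * w p| ^ (2:ℝ)) ^ ((1:ℝ)/2) := holder22 (hv.mul hv) (hw.mul hw)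
      _ = _ := by rw [e2, e3]
  have hVnn : (0:ℝ) ≤ ∫ p in Omg, |v p| ^ (4:ℝ) :=
    integral_nonneg fun p => Real.rpow_nonneg (abs_nonneg _) _
  have hWnn : (0:ℝ) ≤ ∫ p in Omg, |w p| ^ (4:ℝ) :=
    integral_nonneg fun p => Real.rpow_nonneg (abs_nonneg _) _
  have hXnn : (0:ℝ) ≤ ∫ p in Omg, (|v p| * |w p|) ^ (2:ℝ) :=
    integral_nonneg fun p => Real.rpow_nonneg (mul_nonneg (abs_nonneg _) (abs_nonneg _)) _
  calc (∫ p in Omg, (|v p| * |w p|) ^ (2:ℝ)) ^ ((1:ℝ)/2)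
      ≤ ((∫ p in Omg, |v p| ^ (4:ℝ)) ^ ((1:ℝ)/2) * (∫ p in Omg, |w p| ^ (4:ℝ)) ^ ((1:ℝ)/2))
          ^ ((1:ℝ)/2) := Real.rpow_le_rpow hXnn hX (by norm_num)
    _ = ((∫ p in Omg, |v p| ^ (4:ℝ)) ^ ((1:ℝ)/2)) ^ ((1:ℝ)/2)
        * ((∫ p in Omg, |w p| ^ (4:ℝ)) ^ ((1:ℝ)/2)) ^ ((1:ℝ)/2) :=
        Real.mul_rpow (Real.rpow_nonneg hVnn _) (Real.rpow_nonneg hWnn _)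
    _ = Lnorm v 4 * Lnorm w 4 := by
        rw [← Real.rpow_mul hVnn, ← Real.rpow_mul hWnn, Lnorm, Lnorm]; norm_num

lemma holder244 {u v w : ℝ × ℝ → ℝ} (hu : Nice u) (hv : Nice v) (hw : Nice w) :
    ∫ p in Omg, |u p| * |v p| * |w p| ≤ Lnorm u 2 * (Lnorm v 4 * Lnorm w 4) := by
  have h1 := integral_mul_le_Lp_mul_Lq_of_nonneg (μ := volume.restrict Omg) two_two_conj
    (f := fun p => |u p|) (g := fun p => |v p| * |w p|)
    (Eventually.of_forall fun p => abs_nonneg _)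
    (Eventually.of_forall fun p => mul_nonneg (abs_nonneg _) (abs_nonneg _))
    (by simpa using hu.abs.memLp (ENNReal.ofReal 2))
    (by simpa using (hv.abs.mul hw.abs).memLp (ENNReal.ofReal 2))
  have h2 : (∫ p in Omg, |u p| ^ (2:ℝ)) ^ ((1:ℝ)/2) = Lnorm u 2 := by rw [Lnorm]
  calc ∫ p in Omg, |u p| * |v p| * |w p| = ∫ p in Omg, |u p| * (|v p| * |w p|) := by
        simp only [mul_assoc]
    _ ≤ (∫ p in Omg, |u p| ^ (2:ℝ)) ^ ((1:ℝ)/2)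
        * (∫ p in Omg, (|v p| * |w p|) ^ (2:ℝ)) ^ ((1:ℝ)/2) := by simpa using h1
    _ ≤ Lnorm u 2 * (Lnorm v 4 * Lnorm w 4) := by
        rw [h2]
        exact mul_le_mul_of_nonneg_left (sqrt_part_le hv hw) (Lnorm_nonneg u 2)

lemma gradNorm_nonneg (f : ℝ × ℝ → ℝ) : 0 ≤ gradNorm f :=
  Real.rpow_nonneg (integral_nonneg fun p => by positivity) _

lemma gradNorm_sq (f : ℝ × ℝ → ℝ) :
    gradNorm f ^ 2 = ∫ p in Omg, (|px f p| ^ 2 + |py f p| ^ 2) := by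
  have h : 0 ≤ ∫ p in Omg, (|px f p| ^ 2 + |py f p| ^ 2) :=
    integral_nonneg fun p => by positivity
  rw [gradNorm, ← Real.rpow_natCast _ 2, ← Real.rpow_mul h]; norm_num

lemma L2_le_grad {f : ℝ × ℝ → ℝ} (hx : Nice (px f)) (hy : Nice (py f))
    (d : ℝ × ℝ → ℝ) (hd : Nice d) (hcase : d = px f ∨ d = py f) :
    Lnorm d 2 ≤ gradNorm f := by
  have hint : (∫ p in Omg, |d p| ^ (2:ℝ)) ≤ ∫ p in Omg, (|px f p| ^ 2 + |py f p| ^ 2) := by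
    have e1 : (fun p => |d p| ^ (2:ℝ)) = fun p => |d p| * |d p| := funext fun p => rpow_nat2 _
    have e2 : (fun p => |px f p| ^ 2 + |py f p| ^ 2)
        = fun p => |px f p| * |px f p| + |py f p| * |py f p| := funext fun p => by ring
    rw [e1, e2]
    refine integral_mono (hd.abs.mul hd.abs).integrable
      (((hx.abs.mul hx.abs).add (hy.abs.mul hy.abs)).integrable) fun p => ?_
    rcases hcase with h | h <;> rw [h] <;> nlinarith [abs_nonneg (px f p), abs_nonneg (py f p),
      mul_nonneg (abs_nonneg (px f p)) (abs_nonneg (px f p)),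
      mul_nonneg (abs_nonneg (py f p)) (abs_nonneg (py f p))]
  have h0 : 0 ≤ ∫ p in Omg, |d p| ^ (2:ℝ) :=
    integral_nonneg fun p => Real.rpow_nonneg (abs_nonneg _) _
  rw [Lnorm, gradNorm]
  exact Real.rpow_le_rpow h0 (by simpa using hint) (by norm_num)

/-- Coercivity estimate for the Galerkin map `F_m` evaluated at `(ψ, θ)`. -/
theorem stmt_3 (ψ θ f₁ f₂ : ℝ × ℝ → ℝ) (Ra L A C : ℝ)
    (hRa : 0 < Ra) (hL : 0 ≤ L) (hA : 0 ≤ A) (hC0 : 0 < C) (hC1 : C ≤ 1)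
    (hψ : ContDiffOn ℝ 1 ψ (closure Omg)) (hθ : ContDiffOn ℝ 1 θ (closure Omg))
    (hψb : ∀ p ∈ frontier Omg, ψ p = 0) (hθb : ∀ p ∈ frontier Omg, θ p = 0)
    (hf₁ : ContinuousOn f₁ (closure Omg)) (hf₂ : ContinuousOn f₂ (closure Omg))
    (hPψ : Lnorm ψ 2 ≤ C * gradNorm ψ) (hPθ : Lnorm θ 2 ≤ C * gradNorm θ)
    (hθx : Lnorm (px θ) 4 ≤ L) (hθy : Lnorm (py θ) 4 ≤ L)
    (hSob : Lnorm θ 4 ≤ A * gradNorm θ) :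
    gradNorm ψ ^ 2 + gradNorm θ ^ 2
      - Ra * (∫ p in Omg, px θ p * ψ p)
      + (∫ p in Omg, Jac ψ θ p * θ p)
      - (∫ p in Omg, (f₁ p * ψ p + f₂ p * θ p))
    ≥ (1 / 2 - C * Ra / 2 - A * L) * gradNorm ψ ^ 2
      + (1 / 2 - Ra / 2 - A * L) * gradNorm θ ^ 2
      - (C ^ 2 / 2) * (Lnorm f₁ 2 ^ 2 + Lnorm f₂ 2 ^ 2) := by
  have Nψ : Nice ψ := ⟨ψ, hψ.continuousOn, fun _ _ => rfl⟩
  have Nθ : Nice θ := ⟨θ, hθ.continuousOn, fun _ _ => rfl⟩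
  have Nf₁ : Nice f₁ := ⟨f₁, hf₁, fun _ _ => rfl⟩
  have Nf₂ : Nice f₂ := ⟨f₂, hf₂, fun _ _ => rfl⟩
  have Npxψ := nice_px hψ; have Npyψ := nice_py hψ
  have Npxθ := nice_px hθ; have Npyθ := nice_py hθ
  set a := gradNorm ψ with ha'
  set b := gradNorm θ with hb'
  have ha : 0 ≤ a := gradNorm_nonneg ψ
  have hb : 0 ≤ b := gradNorm_nonneg θ
  have hF1 : 0 ≤ Lnorm f₁ 2 := Lnorm_nonneg _ _
  have hF2 : 0 ≤ Lnorm f₂ 2 := Lnorm_nonneg _ _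
  have gψx : Lnorm (px ψ) 2 ≤ a := L2_le_grad Npxψ Npyψ _ Npxψ (Or.inl rfl)
  have gψy : Lnorm (py ψ) 2 ≤ a := L2_le_grad Npxψ Npyψ _ Npyψ (Or.inr rfl)
  have gθx : Lnorm (px θ) 2 ≤ b := L2_le_grad Npxθ Npyθ _ Npxθ (Or.inl rfl)
  -- the Rayleigh coupling term
  have hI1 : (∫ p in Omg, px θ p * ψ p) ≤ C * a * b := by
    calc (∫ p in Omg, px θ p * ψ p) ≤ |∫ p in Omg, px θ p * ψ p| := le_abs_self _
      _ ≤ Lnorm (px θ) 2 * Lnorm ψ 2 := cauchy_schwarz Npxθ Nψ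
      _ ≤ b * (C * a) := mul_le_mul gθx hPψ (Lnorm_nonneg _ _) hb
      _ = C * a * b := by ring
  -- the Jacobian term
  have NJθ : Nice (fun p => Jac ψ θ p * θ p) := ((Npxψ.mul Npyθ).sub (Npyψ.mul Npxθ)).mul Nθ
  have ht1 : (∫ p in Omg, |px ψ p| * |py θ p| * |θ p|) ≤ a * (L * (A * b)) :=
    le_trans (holder244 Npxψ Npyθ Nθ)
      (mul_le_mul gψx (mul_le_mul hθy hSob (Lnorm_nonneg _ _) hL)
        (mul_nonneg (Lnorm_nonneg _ _) (Lnorm_nonneg _ _)) ha)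
  have ht2 : (∫ p in Omg, |py ψ p| * |px θ p| * |θ p|) ≤ a * (L * (A * b)) :=
    le_trans (holder244 Npyψ Npxθ Nθ)
      (mul_le_mul gψy (mul_le_mul hθx hSob (Lnorm_nonneg _ _) hL)
        (mul_nonneg (Lnorm_nonneg _ _) (Lnorm_nonneg _ _)) ha)
  have habs : |∫ p in Omg, Jac ψ θ p * θ p| ≤ 2 * (a * (L * (A * b))) := by
    have hb1 : |∫ p in Omg, Jac ψ θ p * θ p| ≤ ∫ p in Omg, |Jac ψ θ p| * |θ p| := by
      simpa [Real.norm_eq_abs] using norm_integral_le_integral_norm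
        (μ := volume.restrict Omg) (f := fun p => Jac ψ θ p * θ p)
    have hb2 : (∫ p in Omg, |Jac ψ θ p| * |θ p|) ≤
        ∫ p in Omg, (|px ψ p| * |py θ p| * |θ p| + |py ψ p| * |px θ p| * |θ p|) := by
      refine integral_mono
        ((((Npxψ.mul Npyθ).sub (Npyψ.mul Npxθ)).abs).mul Nθ.abs).integrable
        (((Npxψ.abs.mul Npyθ.abs).mul Nθ.abs).add
          ((Npyψ.abs.mul Npxθ.abs).mul Nθ.abs)).integrable fun p => ?_
      calc |Jac ψ θ p| * |θ p| = |px ψ p * py θ p - py ψ p * px θ p| * |θ p| := by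
            rw [Jac]
        _ ≤ (|px ψ p * py θ p| + |py ψ p * px θ p|) * |θ p| := by
            gcongr; exact abs_sub _ _
        _ = |px ψ p| * |py θ p| * |θ p| + |py ψ p| * |px θ p| * |θ p| := by
            rw [abs_mul, abs_mul]; ring
    have hb3 : (∫ p in Omg, (|px ψ p| * |py θ p| * |θ p| + |py ψ p| * |px θ p| * |θ p|)) =
        (∫ p in Omg, |px ψ p| * |py θ p| * |θ p|) +
          ∫ p in Omg, |py ψ p| * |px θ p| * |θ p| :=
      integral_add ((Npxψ.abs.mul Npyθ.abs).mul Nθ.abs).integrable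
        ((Npyψ.abs.mul Npxθ.abs).mul Nθ.abs).integrable
    linarith
  have hI2 : -(2 * (a * (L * (A * b)))) ≤ ∫ p in Omg, Jac ψ θ p * θ p := by
    have := neg_abs_le (∫ p in Omg, Jac ψ θ p * θ p); linarith
  -- the forcing term
  have hsplit : (∫ p in Omg, (f₁ p * ψ p + f₂ p * θ p)) =
      (∫ p in Omg, f₁ p * ψ p) + ∫ p in Omg, f₂ p * θ p :=
    integral_add (Nf₁.mul Nψ).integrable (Nf₂.mul Nθ).integrable
  have hI3a : (∫ p in Omg, f₁ p * ψ p) ≤ Lnorm f₁ 2 * (C * a) :=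
    le_trans (le_abs_self _)
      (le_trans (cauchy_schwarz Nf₁ Nψ) (mul_le_mul_of_nonneg_left hPψ hF1))
  have hI3b : (∫ p in Omg, f₂ p * θ p) ≤ Lnorm f₂ 2 * (C * b) :=
    le_trans (le_abs_self _)
      (le_trans (cauchy_schwarz Nf₂ Nθ) (mul_le_mul_of_nonneg_left hPθ hF2))
  rw [hsplit]
  nlinarith [sq_nonneg (a - b), sq_nonneg (C * Lnorm f₁ 2 - a), sq_nonneg (C * Lnorm f₂ 2 - b),
    mul_nonneg (mul_nonneg hRa.le hC0.le) (sq_nonneg (a - b)),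
    mul_nonneg hRa.le (mul_nonneg (sub_nonneg.mpr hC1) (sq_nonneg b)),
    mul_nonneg (mul_nonneg hA hL) (sq_nonneg (a - b)),
    mul_le_mul_of_nonneg_left hI1 hRa.le, hI2, hI3a, hI3b, ha, hb, hF1, hF2]
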